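/- Embed ℂ^m ⊗ ℂ^{n₁} as the left-block subspace L of m × (n₁+n₂) matrices and ℂ^m ⊗ ℂ^{n₂} as the right-block subspace R. If S_L is an unextendible product basis of L and S_R is a complete orthonormal basis of R consisting of rank-1 matrices, then S_L ∪ S_R is an unextendible product basis of ℂ^m ⊗ ℂ^{n₁+n₂}. -/

import Mathlib

/-- The Frobenius (Hilbert–Schmidt) inner product on complex matrices. -/
noncomputable def frob {a b : ℕ} (M N : Matrix (Fin a) (Fin b) ℂ) : ℂ :=
  ∑ i, ∑ j, star (M i j) * N i j

/-- An unextendible product basis of `ℂ^a ⊗ ℂ^b`, viewed as `a × b` complex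
matrices with the Frobenius inner product. -/
def IsUPB {a b : ℕ} (S : Finset (Matrix (Fin a) (Fin b) ℂ)) : Prop :=
  (∀ M ∈ S, M.rank = 1) ∧
  (∀ M ∈ S, ∀ N ∈ S, frob M N = if M = N then 1 else 0) ∧
  S.card < a * b ∧
  ∀ N : Matrix (Fin a) (Fin b) ℂ, N ≠ 0 → (∀ M ∈ S, frob M N = 0) → 2 ≤ N.rank

/-- A complete orthonormal product basis of `ℂ^a ⊗ ℂ^b`: an orthonormal basis
(`a * b` pairwise orthonormal matrices) all of whose members have rank 1. -/
def IsCompleteProductBasis {a b : ℕ} (S : Finset (Matrix (Fin a) (Fin b) ℂ)) : Prop :=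
  (∀ M ∈ S, M.rank = 1) ∧
  (∀ M ∈ S, ∀ N ∈ S, frob M N = if M = N then 1 else 0) ∧
  S.card = a * b

/-- Embedding of `ℂ^m ⊗ ℂ^{n₁}` as the matrices supported on the first `n₁` columns. -/
def embedL {m n₁ n₂ : ℕ} (A : Matrix (Fin m) (Fin n₁) ℂ) :
    Matrix (Fin m) (Fin (n₁ + n₂)) ℂ :=
  Matrix.of fun i j => if h : (j : ℕ) < n₁ then A i ⟨j, h⟩ else 0

/-- Embedding of `ℂ^m ⊗ ℂ^{n₂}` as the matrices supported on the last `n₂` columns. -/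
def embedR {m n₁ n₂ : ℕ} (A : Matrix (Fin m) (Fin n₂) ℂ) :
    Matrix (Fin m) (Fin (n₁ + n₂)) ℂ :=
  Matrix.of fun i j => if h : (j : ℕ) < n₁ then 0
    else A i ⟨(j : ℕ) - n₁, by have := j.isLt; omega⟩

section aux
variable {m n₁ n₂ : ℕ}

/-- Restriction to the first `n₁` columns. -/
def restrictL (N : Matrix (Fin m) (Fin (n₁ + n₂)) ℂ) : Matrix (Fin m) (Fin n₁) ℂ :=
  Matrix.of fun i j => N i (Fin.castAdd n₂ j)

/-- Restriction to the last `n₂` columns. -/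
def restrictR (N : Matrix (Fin m) (Fin (n₁ + n₂)) ℂ) : Matrix (Fin m) (Fin n₂) ℂ :=
  Matrix.of fun i j => N i (Fin.natAdd n₁ j)

lemma embedL_castAdd (A : Matrix (Fin m) (Fin n₁) ℂ) (i : Fin m) (j : Fin n₁) :
    embedL (n₂ := n₂) A i (Fin.castAdd n₂ j) = A i j := by
  simp [embedL, j.isLt]

lemma embedL_natAdd (A : Matrix (Fin m) (Fin n₁) ℂ) (i : Fin m) (j : Fin n₂) :
    embedL (n₂ := n₂) A i (Fin.natAdd n₁ j) = 0 := by
  simp [embedL]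

lemma embedR_castAdd (A : Matrix (Fin m) (Fin n₂) ℂ) (i : Fin m) (j : Fin n₁) :
    embedR (n₁ := n₁) A i (Fin.castAdd n₂ j) = 0 := by
  simp [embedR, j.isLt]

lemma embedR_natAdd (A : Matrix (Fin m) (Fin n₂) ℂ) (i : Fin m) (j : Fin n₂) :
    embedR (n₁ := n₁) A i (Fin.natAdd n₁ j) = A i j := by
  simp [embedR]

lemma restrictL_embedL (A : Matrix (Fin m) (Fin n₁) ℂ) :
    restrictL (embedL (n₂ := n₂) A) = A := by
  ext i j; simp [restrictL, embedL_castAdd]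

lemma restrictR_embedR (A : Matrix (Fin m) (Fin n₂) ℂ) :
    restrictR (embedR (n₁ := n₁) A) = A := by
  ext i j; simp [restrictR, embedR_natAdd]

lemma restrictL_embedR (A : Matrix (Fin m) (Fin n₂) ℂ) :
    restrictL (embedR (n₁ := n₁) A) = 0 := by
  ext i j; simp [restrictL, embedR_castAdd]

lemma restrictR_embedL (A : Matrix (Fin m) (Fin n₁) ℂ) :
    restrictR (embedL (n₂ := n₂) A) = 0 := by
  ext i j; simp [restrictR, embedL_natAdd]

lemma frob_embedL (A : Matrix (Fin m) (Fin n₁) ℂ) (N : Matrix (Fin m) (Fin (n₁ + n₂)) ℂ) :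
    frob (embedL A) N = frob A (restrictL N) := by
  unfold frob
  refine Finset.sum_congr rfl fun i _ => ?_
  rw [Fin.sum_univ_add]
  simp [embedL_castAdd, embedL_natAdd, restrictL]

lemma frob_embedR (B : Matrix (Fin m) (Fin n₂) ℂ) (N : Matrix (Fin m) (Fin (n₁ + n₂)) ℂ) :
    frob (embedR B) N = frob B (restrictR N) := by
  unfold frob
  refine Finset.sum_congr rfl fun i _ => ?_
  rw [Fin.sum_univ_add]
  simp [embedR_castAdd, embedR_natAdd, restrictR]

lemma frob_zero_right {a b : ℕ} (A : Matrix (Fin a) (Fin b) ℂ) : frob A 0 = 0 := by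
  simp [frob]

lemma embedL_injective : Function.Injective (embedL (m := m) (n₁ := n₁) (n₂ := n₂)) := by
  intro A B h
  rw [← restrictL_embedL (n₂ := n₂) A, h, restrictL_embedL]

lemma embedR_injective : Function.Injective (embedR (m := m) (n₁ := n₁) (n₂ := n₂)) := by
  intro A B h
  rw [← restrictR_embedR (n₁ := n₁) A, h, restrictR_embedR]

lemma embedL_eq_embedR_imp {A : Matrix (Fin m) (Fin n₁) ℂ} {B : Matrix (Fin m) (Fin n₂) ℂ}
    (h : embedL (n₂ := n₂) A = embedR B) : A = 0 := by
  rw [← restrictL_embedL (n₂ := n₂) A, h, restrictL_embedR]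

lemma embedL_ne_embedR {A : Matrix (Fin m) (Fin n₁) ℂ} {B : Matrix (Fin m) (Fin n₂) ℂ}
    (hA : A.rank = 1) : embedL (n₂ := n₂) A ≠ embedR B := by
  intro h
  rw [embedL_eq_embedR_imp h, Matrix.rank_zero] at hA
  exact zero_ne_one hA

lemma embedL_restrictL {N : Matrix (Fin m) (Fin (n₁ + n₂)) ℂ} (h : restrictR (n₁ := n₁) N = 0) :
    embedL (restrictL N) = N := by
  ext i j
  by_cases h' : (j : ℕ) < n₁
  · have : Fin.castAdd n₂ (⟨j, h'⟩ : Fin n₁) = j := by ext; rfl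
    simp [embedL, restrictL, h', this]
  · have hj2 : (j : ℕ) - n₁ < n₂ := by have := j.isLt; omega
    have h0 := congrFun (congrFun h i) ⟨(j : ℕ) - n₁, hj2⟩
    have : Fin.natAdd n₁ (⟨(j : ℕ) - n₁, hj2⟩ : Fin n₂) = j := by ext; simp; omega
    simp only [restrictR, Matrix.of_apply, this, Matrix.zero_apply] at h0
    simp [embedL, h', h0]

/-- Selection matrix corresponding to an injection of columns. -/
def Emat {p q : ℕ} (g : Fin p → Fin q) : Matrix (Fin p) (Fin q) ℂ :=
  Matrix.of fun k j => if j = g k then 1 else 0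

/-- Reverse selection matrix. -/
def Fmat {p q : ℕ} (g : Fin p → Fin q) : Matrix (Fin q) (Fin p) ℂ :=
  Matrix.of fun j k => if j = g k then 1 else 0

lemma Emat_mul_Fmat {p q : ℕ} {g : Fin p → Fin q} (hg : Function.Injective g) :
    Emat g * Fmat g = (1 : Matrix (Fin p) (Fin p) ℂ) := by
  ext k k'
  simp [Matrix.mul_apply, Emat, Fmat, Matrix.one_apply, ite_mul,
    Finset.sum_ite_eq', hg.eq_iff, eq_comm]

lemma rank_of_mul_eq {a p q : ℕ} (A : Matrix (Fin a) (Fin p) ℂ) (g : Fin p → Fin q)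
    (hg : Function.Injective g) : (A * Emat g).rank = A.rank := by
  apply le_antisymm (Matrix.rank_mul_le_left A (Emat g))
  have : A = A * Emat g * Fmat g := by
    rw [Matrix.mul_assoc, Emat_mul_Fmat hg, Matrix.mul_one]
  conv_lhs => rw [this]
  exact Matrix.rank_mul_le_left _ _

lemma embedL_eq_mul (A : Matrix (Fin m) (Fin n₁) ℂ) :
    embedL (n₂ := n₂) A = A * Emat (Fin.castAdd n₂) := by
  ext i j
  erw [Matrix.mul_apply]
  by_cases h : (j : ℕ) < n₁
  · rw [Finset.sum_eq_single (⟨j, h⟩ : Fin n₁)]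
    · rw [Emat, Matrix.of_apply, if_pos (show j = Fin.castAdd n₂ ⟨j, h⟩ from Fin.ext rfl),
        mul_one]
      simp [embedL, h]
    · intro k _ hk
      rw [Emat, Matrix.of_apply, if_neg, mul_zero]
      intro he; exact hk (Fin.ext (congrArg Fin.val he).symm)
    · simp
  · rw [show embedL (n₂ := n₂) A i j = 0 by simp [embedL, h]]
    refine (Finset.sum_eq_zero fun k _ => ?_).symm
    rw [Emat, Matrix.of_apply, if_neg, mul_zero]
    intro he
    have : (j : ℕ) = (k : ℕ) := congrArg Fin.val he
    omega

lemma embedR_eq_mul (A : Matrix (Fin m) (Fin n₂) ℂ) :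
    embedR (n₁ := n₁) A = A * Emat (Fin.natAdd n₁) := by
  ext i j
  erw [Matrix.mul_apply]
  by_cases h : (j : ℕ) < n₁
  · rw [show embedR (n₁ := n₁) A i j = 0 by simp [embedR, h]]
    refine (Finset.sum_eq_zero fun k _ => ?_).symm
    rw [Emat, Matrix.of_apply, if_neg, mul_zero]
    intro he
    have : (j : ℕ) = n₁ + (k : ℕ) := congrArg Fin.val he
    omega
  · have hj2 : (j : ℕ) - n₁ < n₂ := by have := j.isLt; omega
    rw [Finset.sum_eq_single (⟨(j : ℕ) - n₁, hj2⟩ : Fin n₂)]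
    · rw [Emat, Matrix.of_apply,
        if_pos (show j = Fin.natAdd n₁ ⟨(j : ℕ) - n₁, hj2⟩ by ext; simp; omega), mul_one]
      simp [embedR, h]
    · intro k _ hk
      rw [Emat, Matrix.of_apply, if_neg, mul_zero]
      intro he
      have : (j : ℕ) = n₁ + (k : ℕ) := congrArg Fin.val he
      exact hk (by ext; simp; omega)
    · simp

lemma rank_embedL (A : Matrix (Fin m) (Fin n₁) ℂ) :
    (embedL (n₂ := n₂) A).rank = A.rank := by
  rw [embedL_eq_mul]
  exact rank_of_mul_eq A _ (Fin.castAdd_injective n₁ n₂)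

lemma rank_embedR (A : Matrix (Fin m) (Fin n₂) ℂ) :
    (embedR (n₁ := n₁) A).rank = A.rank := by
  rw [embedR_eq_mul]
  exact rank_of_mul_eq A _ (Fin.strictMono_natAdd n₁).injective

/-- A matrix viewed as a Euclidean vector. -/
noncomputable def toE {a b : ℕ} (M : Matrix (Fin a) (Fin b) ℂ) :
    EuclideanSpace ℂ (Fin a × Fin b) := WithLp.toLp 2 (fun p : Fin a × Fin b => M p.1 p.2)

lemma frob_eq_inner {a b : ℕ} (M N : Matrix (Fin a) (Fin b) ℂ) :
    frob M N = inner ℂ (toE M) (toE N) := by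
  simp [frob, toE, PiLp.inner_apply, RCLike.inner_apply, Fintype.sum_prod_type, mul_comm]

lemma complete_orth {a b : ℕ} (S : Finset (Matrix (Fin a) (Fin b) ℂ))
    (hS : IsCompleteProductBasis S) (v : Matrix (Fin a) (Fin b) ℂ)
    (hv : ∀ B ∈ S, frob B v = 0) : v = 0 := by
  classical
  set f : {x // x ∈ S} → EuclideanSpace ℂ (Fin a × Fin b) := fun B => toE B.1 with hf
  have horth : Orthonormal ℂ f := by
    rw [orthonormal_iff_ite]
    intro i j
    rw [hf, ← frob_eq_inner, hS.2.1 i.1 i.2 j.1 j.2]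
    exact if_congr Subtype.ext_iff.symm rfl rfl
  have hspan : Submodule.span ℂ (Set.range f) = ⊤ :=
    horth.linearIndependent.span_eq_top_of_card_eq_finrank' (by
      simp [Fintype.card_coe, hS.2.2, finrank_euclideanSpace])
  have hmem : toE v ∈ (Submodule.span ℂ (Set.range f))ᗮ := by
    rw [Submodule.mem_orthogonal]
    intro u hu
    induction hu using Submodule.span_induction with
    | mem x hx =>
      obtain ⟨B, rfl⟩ := hx
      rw [← frob_eq_inner]
      exact hv B.1 B.2
    | zero => simp
    | add x y _ _ hx hy => rw [inner_add_left, hx, hy, add_zero]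
    | smul c x _ hx => rw [inner_smul_left, hx, mul_zero]
  rw [hspan, Submodule.top_orthogonal_eq_bot, Submodule.mem_bot] at hmem
  ext i j
  have := congrArg (fun x => x (i, j)) hmem
  simpa [toE] using this

end aux

/-- If `S_L` is a UPB of the left block `ℂ^m ⊗ ℂ^{n₁}` and `S_R` is a complete
orthonormal basis of the right block `ℂ^m ⊗ ℂ^{n₂}` consisting of rank-1
matrices, then their union is a UPB of `ℂ^m ⊗ ℂ^{n₁+n₂}`. -/
theorem union_UPB_with_complete_basis_is_UPB {m n₁ n₂ : ℕ}
    (S_L : Finset (Matrix (Fin m) (Fin n₁) ℂ))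
    (S_R : Finset (Matrix (Fin m) (Fin n₂) ℂ))
    (hL : IsUPB S_L) (hR : IsCompleteProductBasis S_R) :
    IsUPB (S_L.image (embedL (n₂ := n₂)) ∪ S_R.image (embedR (n₁ := n₁))) := by
  classical
  obtain ⟨hL1, hL2, hL3, hL4⟩ := hL
  obtain ⟨hR1, hR2, hR3⟩ := hR
  refine ⟨?_, ?_, ?_, ?_⟩
  · -- rank 1
    intro M hM
    rcases Finset.mem_union.1 hM with h | h
    · obtain ⟨A, hA, rfl⟩ := Finset.mem_image.1 h
      rw [rank_embedL]; exact hL1 A hA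
    · obtain ⟨B, hB, rfl⟩ := Finset.mem_image.1 h
      rw [rank_embedR]; exact hR1 B hB
  · -- orthonormality
    intro M hM N hN
    rcases Finset.mem_union.1 hM with h | h
    · obtain ⟨A, hA, rfl⟩ := Finset.mem_image.1 h
      rcases Finset.mem_union.1 hN with h' | h'
      · obtain ⟨B, hB, rfl⟩ := Finset.mem_image.1 h'
        rw [frob_embedL, restrictL_embedL, hL2 A hA B hB]
        exact if_congr embedL_injective.eq_iff.symm rfl rfl
      · obtain ⟨B, hB, rfl⟩ := Finset.mem_image.1 h'
        rw [frob_embedL, restrictL_embedR, frob_zero_right,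
          if_neg (embedL_ne_embedR (hL1 A hA))]
    · obtain ⟨B, hB, rfl⟩ := Finset.mem_image.1 h
      rcases Finset.mem_union.1 hN with h' | h'
      · obtain ⟨A, hA, rfl⟩ := Finset.mem_image.1 h'
        rw [frob_embedR, restrictR_embedL, frob_zero_right,
          if_neg (Ne.symm (embedL_ne_embedR (hL1 A hA)))]
      · obtain ⟨B', hB', rfl⟩ := Finset.mem_image.1 h'
        rw [frob_embedR, restrictR_embedR, hR2 B hB B' hB']
        exact if_congr embedR_injective.eq_iff.symm rfl rfl
  · -- cardinality
    have hdis : Disjoint (S_L.image (embedL (n₂ := n₂))) (S_R.image (embedR (n₁ := n₁))) := by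
      rw [Finset.disjoint_left]
      intro x hx hx'
      obtain ⟨A, hA, rfl⟩ := Finset.mem_image.1 hx
      obtain ⟨B, hB, hBeq⟩ := Finset.mem_image.1 hx'
      exact embedL_ne_embedR (hL1 A hA) hBeq.symm
    rw [Finset.card_union_of_disjoint hdis,
      Finset.card_image_of_injective _ embedL_injective,
      Finset.card_image_of_injective _ embedR_injective]
    have hmul : m * (n₁ + n₂) = m * n₁ + m * n₂ := Nat.mul_add m n₁ n₂
    omega
  · -- unextendibility
    intro N hN hfrob
    have hBort : ∀ B ∈ S_R, frob B (restrictR N) = 0 := fun B hB => by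
      rw [← frob_embedR]
      exact hfrob _ (Finset.mem_union_right _ (Finset.mem_image_of_mem _ hB))
    have hres : restrictR (n₁ := n₁) N = 0 := complete_orth S_R ⟨hR1, hR2, hR3⟩ _ hBort
    have hNL : embedL (restrictL N) = N := embedL_restrictL hres
    have hrlne : restrictL (n₂ := n₂) N ≠ 0 := by
      intro h0
      apply hN
      rw [← hNL, h0]
      ext i j
      simp [embedL]
    have hAort : ∀ A ∈ S_L, frob A (restrictL N) = 0 := fun A hA => by
      rw [← frob_embedL]
      exact hfrob _ (Finset.mem_union_left _ (Finset.mem_image_of_mem _ hA))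
    have h2 : 2 ≤ (restrictL (n₂ := n₂) N).rank := hL4 _ hrlne hAort
    calc 2 ≤ (restrictL (n₂ := n₂) N).rank := h2
    _ = N.rank := by rw [← rank_embedL (n₂ := n₂) (restrictL N), hNL]
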